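/- arXiv:1506.09046 — 2 statements merged into one kernel-verified Lean document; each statement's English description precedes it below -/
import Mathlib

section
/- Let $P(\lambda, r) := (-\lambda + r^{2\alpha} + \mu + k + f'(0))(\sqrt{-\lambda + r^2} + 1) - \mu$ for $r \geq 0$ and $\lambda \in \mathbb{C}$, where the square root is the principal branch. Let $r_0$ be the unique positive root of $r_0^2 = r_0^{2\alpha} + f'(0) + k$. Then for $0 \leq r < r_0$, $P(\lambda, r) \neq 0$ for all $\lambda \in \mathbb{C}$ (with $-\lambda + r^2 \notin \mathbb{R}_-$). -/
open Complex

/-- Let `P(λ,r) = (-λ + r^{2α} + μ + k + f'(0))(√(-λ + r²) + 1) - μ` with the principal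
square root, and let `r₀ > 0` satisfy `r₀² = r₀^{2α} + f'(0) + k`. Then for `0 ≤ r < r₀`,
`P(λ,r) ≠ 0` for every `λ ∈ ℂ` such that `-λ + r²` is not a nonpositive real. -/
theorem stmt12 (α μ k a r₀ : ℝ) (hα : α ∈ Set.Ioo (0:ℝ) 1) (hμ : 0 < μ)
    (hk : 0 ≤ k) (ha : 0 < a)
    (hr₀ : 0 < r₀) (hr₀eq : r₀ ^ 2 = r₀ ^ (2 * α) + a + k) :
    ∀ r : ℝ, 0 ≤ r → r < r₀ → ∀ lam : ℂ,
      (∀ s : ℝ, s ≤ 0 → -lam + (r : ℂ) ^ 2 ≠ (s : ℂ)) →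
      ((-lam + ((r ^ (2 * α) : ℝ) : ℂ) + (μ : ℂ) + (k : ℂ) + (a : ℂ)) *
          ((-lam + (r : ℂ) ^ 2) ^ ((1 : ℂ) / 2) + 1) - (μ : ℂ)) ≠ 0 := by
  obtain ⟨hα0, hα1⟩ := hα
  intro r hr0 hrr₀ lam hz
  obtain ⟨z, hzdef⟩ : ∃ z : ℂ, z = -lam + (r:ℂ)^2 := ⟨_, rfl⟩
  have hz' : ∀ s : ℝ, s ≤ 0 → z ≠ (s : ℂ) := by rw [hzdef]; exact hz
  have hz0 : z ≠ 0 := by simpa using hz' 0 le_rfl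
  have harg_ne : Complex.arg z ≠ Real.pi := by
    intro h
    rw [Complex.arg_eq_pi_iff] at h
    obtain ⟨hre, him⟩ := h
    have hzr : z = ((z.re : ℝ) : ℂ) := Complex.ext (by simp) (by simp [him])
    exact hz' z.re hre.le hzr
  have harg_lt : Complex.arg z < Real.pi :=
    lt_of_le_of_ne (Complex.arg_le_pi z) harg_ne
  have harg_gt : -Real.pi < Complex.arg z := Complex.neg_pi_lt_arg z
  obtain ⟨w, hwdef⟩ : ∃ w : ℂ, w = z ^ ((1:ℂ)/2) := ⟨_, rfl⟩
  have hw2 : w ^ 2 = z := by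
    rw [hwdef, sq, ← Complex.cpow_add _ _ hz0]
    norm_num
  have hwre : 0 < w.re := by
    rw [hwdef, Complex.cpow_def_of_ne_zero hz0, Complex.exp_re]
    have him : (Complex.log z * ((1:ℂ)/2)).im = Complex.arg z / 2 := by
      simp [Complex.mul_im, Complex.log_im]
      ring
    rw [him]
    apply mul_pos (Real.exp_pos _)
    apply Real.cos_pos_of_mem_Ioo
    constructor
    · linarith
    · linarith
  -- real inequality : r^2 < r^(2α) + a + k
  have hnp2 : ∀ t : ℝ, t ^ ((2:ℝ)) = t ^ (2:ℕ) := by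
    intro t
    rw [show ((2:ℝ)) = ((2:ℕ):ℝ) from by norm_num, Real.rpow_natCast]
  have hr₀1 : 1 < r₀ := by
    by_contra h
    push_neg at h
    have h1 : r₀ ^ ((2:ℝ)) ≤ r₀ ^ (2*α) :=
      Real.rpow_le_rpow_of_exponent_ge hr₀ h (by nlinarith)
    rw [hnp2] at h1
    nlinarith
  have hc : r ^ 2 < r ^ (2*α) + a + k := by
    rcases eq_or_lt_of_le hr0 with h0 | h0
    · rw [← h0, Real.zero_rpow (by nlinarith)]
      norm_num
      nlinarith
    · have h1 : r ^ ((2:ℝ)) = r ^ (2*α) * r ^ (2 - 2*α) := by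
        rw [← Real.rpow_add h0]
        congr 1
        ring
      have h2 : r ^ (2 - 2*α) ≤ r₀ ^ (2 - 2*α) :=
        Real.rpow_le_rpow hr0 hrr₀.le (by linarith)
      have h3 : r ^ (2*α) < r₀ ^ (2*α) :=
        Real.rpow_lt_rpow hr0 hrr₀ (by linarith)
      have h4 : (1:ℝ) < r₀ ^ (2 - 2*α) :=
        (Real.one_lt_rpow_iff_of_pos hr₀).mpr (Or.inl ⟨hr₀1, by linarith⟩)
      have h5 : r₀ ^ ((2:ℝ)) = r₀ ^ (2*α) * r₀ ^ (2 - 2*α) := by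
        rw [← Real.rpow_add hr₀]
        congr 1
        ring
      rw [hnp2] at h1 h5
      have hr2a_pos : 0 < r ^ (2*α) := Real.rpow_pos_of_pos h0 _
      nlinarith [mul_le_mul_of_nonneg_left h2 hr2a_pos.le,
        mul_lt_mul_of_pos_right h3 (by linarith : (0:ℝ) < r₀ ^ (2 - 2*α) - 1)]
  obtain ⟨c, hcdef⟩ : ∃ c : ℝ, c = r ^ (2*α) + k + a - r ^ 2 := ⟨_, rfl⟩
  have hcpos : 0 < c := by rw [hcdef]; nlinarith
  intro heq
  have key : (w ^ 2 + (c:ℂ) + (μ:ℂ)) * (w + 1) - (μ:ℂ) = 0 := by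
    have hfac : (w ^ 2 + (c:ℂ) + (μ:ℂ))
        = (-lam + ((r ^ (2 * α) : ℝ) : ℂ) + (μ : ℂ) + (k : ℂ) + (a : ℂ)) := by
      rw [hw2, hzdef, hcdef]
      push_cast
      ring
    rw [← hzdef, ← hwdef] at heq
    rw [hfac]
    exact heq
  obtain ⟨x, hx⟩ : ∃ x : ℝ, x = w.re := ⟨_, rfl⟩
  obtain ⟨y, hy⟩ : ∃ y : ℝ, y = w.im := ⟨_, rfl⟩
  have hxw : 0 < x := hx ▸ hwre
  have hw' : w = (x:ℂ) + (y:ℂ) * I := by rw [hx, hy, Complex.re_add_im]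
  rw [hw'] at key
  have kre := congrArg Complex.re key
  have kim := congrArg Complex.im key
  simp only [pow_two, Complex.add_re, Complex.add_im, Complex.sub_re, Complex.sub_im,
    Complex.mul_re, Complex.mul_im, Complex.I_re, Complex.I_im,
    Complex.ofReal_re, Complex.ofReal_im, Complex.one_re, Complex.one_im,
    Complex.zero_re, Complex.zero_im] at kre kim
  have hkey_re : (x*x - y*y + c + μ) * (x+1) - 2*x*y*y - μ = 0 := by
    linear_combination kre
  have hkey_im : (x*x - y*y + c + μ) * y + 2*x*y*(x+1) = 0 := by
    linear_combination kim
  clear key kre kim hz hz' heq hw' hw2 hwdef hzdef hwre hz0 harg_ne harg_lt harg_gt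
  clear hnp2 hcdef hc hr₀eq hx hy lam z w
  rcases eq_or_ne y 0 with hy0 | hy0
  · rw [hy0] at hkey_re
    nlinarith [hkey_re, hxw, hcpos, hμ, mul_pos hxw hxw]
  · have hysq : y * y = 3*(x*x) + 2*x + c + μ := by
      have h6 : y * ((3*(x*x) + 2*x + c + μ) - y*y) = 0 := by
        linear_combination hkey_im
      rcases mul_eq_zero.mp h6 with h | h
      · exact absurd h hy0
      · linarith
    have eq0 : (x*x - (3*(x*x) + 2*x + c + μ) + c + μ) * (x+1)
        - 2*x*(3*(x*x) + 2*x + c + μ) - μ = 0 := by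
      linear_combination hkey_re + (3*x+1) * hysq
    nlinarith [eq0, hxw, hcpos, hμ, mul_pos hxw hxw, mul_pos (mul_pos hxw hxw) hxw]
end

section
/- Let $\alpha \in (0,1)$ and let $\phi : \mathbb{R} \to \mathbb{R}$ be a bounded $C^2$ function, even, nonincreasing in $|x|$, and constant on $[-A_1, A_1]$ for some $A_1 > 0$, with $-\phi''(x) \leq D_0\,\phi(x)/(1+x^2)$ for $|x| \geq A_1$ and $\phi(x) \geq c_0(1+|x|)^{-\sigma}$ for some $c_0, \sigma, D_0 > 0$. Then there exists $D > 0$ such that $(-\Delta)^\alpha \phi(x) \leq D\,\phi(x)$ for all $x \in \mathbb{R}$. -/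
open Real MeasureTheory

/-- The fractional Laplacian of order `α` on `ℝ` (singular integral form). -/
noncomputable def fracLap (α cα : ℝ) (h : ℝ → ℝ) (x : ℝ) : ℝ :=
  cα * ∫ z : ℝ, (2 * h x - h (x + z) - h (x - z)) / (2 * |z| ^ (1 + 2 * α))

open intervalIntegral in
lemma aux_int_inner {s : ℝ} (hs : -1 < s) :
    Integrable (fun z : ℝ => if |z| ≤ 1 then |z| ^ s else 0) := by
  have h0 : IntegrableOn (fun z : ℝ => z ^ s) (Set.Ioc 0 1) := by
    have h := intervalIntegrable_rpow' (a := 0) (b := 1) hs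
    rw [intervalIntegrable_iff, Set.uIoc_of_le zero_le_one] at h
    exact h
  have h1 : IntegrableOn (fun z : ℝ => |z| ^ s) (Set.Ioc 0 1) :=
    h0.congr_fun (fun z hz => by rw [abs_of_pos hz.1]) measurableSet_Ioc
  have hF : Integrable ((Set.Ioc (0:ℝ) 1).indicator (fun z : ℝ => |z| ^ s)) :=
    h1.integrable_indicator measurableSet_Ioc
  have hFn : Integrable (fun z : ℝ => (Set.Ioc (0:ℝ) 1).indicator (fun z : ℝ => |z| ^ s) (-z)) :=
    hF.comp_neg
  have hsum := hF.add hFn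
  refine hsum.congr ?_
  have hne : ∀ᵐ z : ℝ, z ≠ 0 := by
    refine (ae_iff).mpr ?_
    simpa [Set.setOf_eq_eq_singleton] using (measure_singleton (0:ℝ))
  filter_upwards [hne] with z hz
  simp only [Pi.add_apply, Set.indicator_apply, Set.mem_Ioc]
  rcases hz.lt_or_gt with hneg | hpos
  · rcases abs_cases z with ⟨he, hz0⟩ | ⟨he, hz0⟩
    · linarith
    · by_cases h1z : |z| ≤ 1
      · rw [if_neg (by push_neg; intro h; linarith),
          if_pos ⟨by linarith, by linarith [he ▸ h1z]⟩, if_pos h1z, abs_neg]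
        ring
      · rw [if_neg (by push_neg; intro h; linarith),
          if_neg (by push_neg; intro h; push_neg at h1z; linarith [he ▸ h1z.le]), if_neg h1z]
        ring
  · rcases abs_cases z with ⟨he, hz0⟩ | ⟨he, hz0⟩
    · by_cases h1z : |z| ≤ 1
      · rw [if_pos ⟨hpos, by linarith [he ▸ h1z]⟩, if_neg (by push_neg; intro h; linarith),
          if_pos h1z]
        ring
      · rw [if_neg (by push_neg; intro h; push_neg at h1z; linarith [he ▸ h1z.le]),
          if_neg (by push_neg; intro h; linarith), if_neg h1z]
        ring
    · linarith

lemma aux_int_outer {s : ℝ} (hs : s < -1) :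
    Integrable (fun z : ℝ => if |z| ≤ 1 then 0 else |z| ^ s) := by
  have h0 : IntegrableOn (fun z : ℝ => z ^ s) (Set.Ioi 1) :=
    integrableOn_Ioi_rpow_of_lt hs one_pos
  have h1 : IntegrableOn (fun z : ℝ => |z| ^ s) (Set.Ioi 1) :=
    h0.congr_fun (fun z hz => by rw [abs_of_pos (lt_trans one_pos hz)]) measurableSet_Ioi
  have hF : Integrable ((Set.Ioi (1:ℝ)).indicator (fun z : ℝ => |z| ^ s)) :=
    h1.integrable_indicator measurableSet_Ioi
  have hFn : Integrable (fun z : ℝ => (Set.Ioi (1:ℝ)).indicator (fun z : ℝ => |z| ^ s) (-z)) :=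
    hF.comp_neg
  have hsum := hF.add hFn
  refine hsum.congr (Filter.Eventually.of_forall ?_)
  intro z
  simp only [Pi.add_apply, Set.indicator_apply, Set.mem_Ioi]
  by_cases h1z : |z| ≤ 1
  · rw [if_neg (by rcases abs_cases z with ⟨he,_⟩|⟨he,_⟩ <;> (push_neg; linarith [he ▸ h1z])),
      if_neg (by rcases abs_cases z with ⟨he,_⟩|⟨he,_⟩ <;> (push_neg; linarith [he ▸ h1z])),
      if_pos h1z]
    ring
  · push_neg at h1z
    rcases abs_cases z with ⟨he, hz0⟩ | ⟨he, hz0⟩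
    · rw [if_pos (he ▸ h1z), if_neg (by push_neg; linarith), if_neg (by push_neg; exact h1z)]
      ring
    · rw [if_neg (by push_neg; linarith), if_pos (he ▸ h1z), if_neg (by push_neg; exact h1z),
        abs_neg]
      ring

set_option maxHeartbeats 1600000

/-- For a bounded, even, `C²` function `φ`, nonincreasing in `|x|`, constant on
`[-A₁,A₁]`, with `-φ'' ≤ D₀ φ/(1+x²)` for `|x| ≥ A₁` and the algebraic lower bound
`φ(x) ≥ c₀ (1+|x|)^{-σ}`, there is `D > 0` with `(-Δ)^α φ ≤ D φ` everywhere. -/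
theorem stmt18 (α cα A₁ D₀ c₀ σ : ℝ) (φ : ℝ → ℝ)
    (hα : α ∈ Set.Ioo (0:ℝ) 1) (hcα : 0 < cα) (hA₁ : 0 < A₁) (hD₀ : 0 < D₀)
    (hc₀ : 0 < c₀) (hσ : 0 < σ)
    (hC2 : ContDiff ℝ 2 φ)
    (hbdd : ∃ M : ℝ, ∀ x, |φ x| ≤ M)
    (heven : ∀ x, φ (-x) = φ x)
    (hmono : ∀ x y : ℝ, |x| ≤ |y| → φ y ≤ φ x)
    (hconst : ∀ x : ℝ, |x| ≤ A₁ → φ x = φ A₁)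
    (hsecond : ∀ x : ℝ, A₁ ≤ |x| → -(deriv (deriv φ) x) ≤ D₀ * φ x / (1 + x ^ 2))
    (hlower : ∀ x : ℝ, c₀ * (1 + |x|) ^ (-σ) ≤ φ x) :
    ∃ D : ℝ, 0 < D ∧ ∀ x : ℝ, fracLap α cα φ x ≤ D * φ x := by
  obtain ⟨hα0, hα1⟩ := hα
  obtain ⟨M, hM⟩ := hbdd
  have hφpos : ∀ t, 0 < φ t := fun t =>
    lt_of_lt_of_le (mul_pos hc₀ (Real.rpow_pos_of_pos (by positivity) _)) (hlower t)
  have hφM : ∀ t, φ t ≤ M := fun t => (le_abs_self _).trans (hM t)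
  have hM0 : 0 ≤ M := le_trans (hφpos 0).le (hφM 0)
  -- derivatives
  have hder := (contDiff_succ_iff_deriv (n := 1)).mp (by exact_mod_cast hC2)
  have hd1 : Differentiable ℝ φ := hder.1
  have hder2 := (contDiff_succ_iff_deriv (n := 0)).mp (by exact_mod_cast hder.2.2)
  have hd2 : Differentiable ℝ (deriv φ) := hder2.1
  have hc2c : Continuous (deriv (deriv φ)) := hder2.2.2.continuous
  -- key second-order bound
  have keyN : ∀ x y cs : ℝ, 0 ≤ y →
      (∀ τ ∈ Set.Icc (x - y) (x + y), -(deriv (deriv φ) τ) ≤ cs) →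
      2 * φ x - φ (x + y) - φ (x - y) ≤ cs * y ^ 2 := by
    intro x y cs hy hb
    have hu : ∀ t : ℝ, HasDerivAt (fun t => 2 * φ x - φ (x + t) - φ (x - t))
        (deriv φ (x - t) - deriv φ (x + t)) t := by
      intro t
      have h1 : HasDerivAt (fun t : ℝ => φ (x + t)) (deriv φ (x + t)) t := by
        simpa [Function.comp_def] using (hd1 (x + t)).hasDerivAt.comp t ((hasDerivAt_id t).const_add x)
      have h2 : HasDerivAt (fun t : ℝ => φ (x - t)) (-deriv φ (x - t)) t := by
        simpa [Function.comp_def] using (hd1 (x - t)).hasDerivAt.comp t ((hasDerivAt_id t).const_sub x)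
      have h3 := ((hasDerivAt_const t (2 * φ x)).sub h1).sub h2
      exact h3.congr_deriv (by ring)
    have hderiv_u : deriv (fun t => 2 * φ x - φ (x + t) - φ (x - t)) =
        fun t => deriv φ (x - t) - deriv φ (x + t) := funext fun t => (hu t).deriv
    have hcont : Continuous fun t => deriv φ (x - t) - deriv φ (x + t) :=
      ((hd2.continuous.comp (continuous_const.sub continuous_id)).sub
        (hd2.continuous.comp (continuous_const.add continuous_id)))
    have hrep : 2 * φ x - φ (x + y) - φ (x - y)
        = ∫ t in (0:ℝ)..y, (deriv φ (x - t) - deriv φ (x + t)) := by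
      have hint : IntervalIntegrable
          (deriv (fun t => 2 * φ x - φ (x + t) - φ (x - t))) volume 0 y := by
        rw [hderiv_u]; exact hcont.intervalIntegrable _ _
      have h4 := intervalIntegral.integral_deriv_eq_sub
        (f := fun t => 2 * φ x - φ (x + t) - φ (x - t))
        (fun t _ => (hu t).differentiableAt) hint
      rw [hderiv_u] at h4
      rw [h4]
      simp only [add_zero, sub_zero]
      ring
    rw [hrep]
    have hmono2 : ∀ t ∈ Set.Icc (0:ℝ) y,
        deriv φ (x - t) - deriv φ (x + t) ≤ (2 * cs) * t := by
      intro t ht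
      have h1 : x - t ≤ x + t := by linarith [ht.1]
      have hrep2 : (∫ τ in (x - t)..(x + t), deriv (deriv φ) τ)
          = deriv φ (x + t) - deriv φ (x - t) :=
        intervalIntegral.integral_deriv_eq_sub (fun τ _ => hd2 τ) (hc2c.intervalIntegrable _ _)
      have hlow : (∫ τ in (x - t)..(x + t), (-cs : ℝ))
          ≤ ∫ τ in (x - t)..(x + t), deriv (deriv φ) τ := by
        apply intervalIntegral.integral_mono_on h1
          (intervalIntegrable_const :
            IntervalIntegrable (fun _ => (-cs : ℝ)) volume (x - t) (x + t))
          (hc2c.intervalIntegrable _ _)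
        intro τ hτ
        have hbb := hb τ ⟨by linarith [hτ.1, ht.2], by linarith [hτ.2, ht.2]⟩
        linarith
      rw [intervalIntegral.integral_const, hrep2, smul_eq_mul] at hlow
      have he : (x + t - (x - t)) * (-cs) = -(2 * cs * t) := by ring
      rw [he] at hlow
      linarith
    have hfin : (∫ t in (0:ℝ)..y, (deriv φ (x - t) - deriv φ (x + t)))
        ≤ ∫ t in (0:ℝ)..y, (2 * cs) * t :=
      intervalIntegral.integral_mono_on hy (hcont.intervalIntegrable _ _)
        (Continuous.intervalIntegrable (by continuity) _ _) hmono2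
    have hval : (∫ t in (0:ℝ)..y, (2 * cs) * t) = cs * y ^ 2 := by
      rw [intervalIntegral.integral_const_mul, integral_id]
      ring
    rw [hval] at hfin
    exact hfin
  -- constants
  obtain ⟨A₂, hA₂def⟩ : ∃ A₂ : ℝ, A₂ = 2 * A₁ + 2 := ⟨_, rfl⟩
  have hA₂2 : (2:ℝ) ≤ A₂ := by rw [hA₂def]; linarith
  have hA₂pos : (0:ℝ) < A₂ := by linarith
  obtain ⟨K, hK⟩ := (isCompact_Icc (a := -(A₂+1)) (b := A₂+1)).exists_bound_of_continuousOn
      hc2c.continuousOn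
  have hK0 : 0 ≤ K := le_trans (norm_nonneg _) (hK 0 (by constructor <;> linarith))
  obtain ⟨g1, hg1def⟩ : ∃ g : ℝ → ℝ, g = fun z => if |z| ≤ 1 then |z| ^ (1 - 2*α) else 0 := ⟨_, rfl⟩
  obtain ⟨g2, hg2def⟩ : ∃ g : ℝ → ℝ, g = fun z => if |z| ≤ 1 then 0 else |z| ^ (-(1 + 2*α)) := ⟨_, rfl⟩
  have hg1int : Integrable g1 := by rw [hg1def]; exact aux_int_inner (by linarith)
  have hg2int : Integrable g2 := by rw [hg2def]; exact aux_int_outer (by linarith)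
  have hg1nn : ∀ z, 0 ≤ g1 z := fun z => by
    simp only [hg1def]; split_ifs
    exacts [Real.rpow_nonneg (abs_nonneg z) _, le_refl 0]
  have hg2nn : ∀ z, 0 ≤ g2 z := fun z => by
    simp only [hg2def]; split_ifs
    exacts [le_refl 0, Real.rpow_nonneg (abs_nonneg z) _]
  obtain ⟨Iin, hIindef⟩ : ∃ I : ℝ, I = ∫ z : ℝ, g1 z := ⟨_, rfl⟩
  obtain ⟨Iout, hIoutdef⟩ : ∃ I : ℝ, I = ∫ z : ℝ, g2 z := ⟨_, rfl⟩
  have hIin0 : 0 ≤ Iin := hIindef ▸ integral_nonneg hg1nn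
  have hIout0 : 0 ≤ Iout := hIoutdef ▸ integral_nonneg hg2nn
  -- generic comparison step
  have hcore : ∀ (x c₁ c₂ : ℝ), 0 ≤ c₁ → 0 ≤ c₂ →
      (∀ z : ℝ, z ≠ 0 → (2 * φ x - φ (x + z) - φ (x - z)) / (2 * |z| ^ (1 + 2 * α))
        ≤ c₁ * g1 z + c₂ * g2 z) →
      fracLap α cα φ x ≤ cα * (c₁ * Iin + c₂ * Iout) := by
    intro x c₁ c₂ hc₁ hc₂ hpt
    show cα * (∫ z : ℝ, (2 * φ x - φ (x + z) - φ (x - z)) / (2 * |z| ^ (1 + 2 * α)))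
      ≤ cα * (c₁ * Iin + c₂ * Iout)
    by_cases hi : Integrable
        (fun z : ℝ => (2 * φ x - φ (x + z) - φ (x - z)) / (2 * |z| ^ (1 + 2 * α)))
    · have hH : Integrable (fun z => c₁ * g1 z + c₂ * g2 z) :=
        (hg1int.const_mul _).add (hg2int.const_mul _)
      have hne : ∀ᵐ z : ℝ, z ≠ 0 := by
        refine (ae_iff).mpr ?_
        simpa [Set.setOf_eq_eq_singleton] using (measure_singleton (0:ℝ))
      have hle := integral_mono_ae hi hH (by filter_upwards [hne] with z hz; exact hpt z hz)
      have heq2 : (∫ z : ℝ, (c₁ * g1 z + c₂ * g2 z)) = c₁ * Iin + c₂ * Iout := by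
        rw [integral_add (hg1int.const_mul _) (hg2int.const_mul _),
          integral_const_mul, integral_const_mul, hIindef, hIoutdef]
      rw [heq2] at hle
      exact mul_le_mul_of_nonneg_left hle hcα.le
    · rw [integral_undef hi, mul_zero]
      exact mul_nonneg hcα.le (add_nonneg (mul_nonneg hc₁ hIin0) (mul_nonneg hc₂ hIout0))
  -- pointwise bound, small regime
  have hsmall_pt : ∀ x : ℝ, |x| ≤ A₂ → ∀ z : ℝ, z ≠ 0 →
      (2 * φ x - φ (x + z) - φ (x - z)) / (2 * |z| ^ (1 + 2 * α))
        ≤ (K/2) * g1 z + M * g2 z := by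
    intro x hx z hz
    have hy : 0 < |z| := abs_pos.mpr hz
    have hden : (0:ℝ) < 2 * |z| ^ (1 + 2 * α) := by
      have := Real.rpow_pos_of_pos hy (1 + 2 * α); linarith
    have hNsym : 2 * φ x - φ (x + z) - φ (x - z)
        = 2 * φ x - φ (x + |z|) - φ (x - |z|) := by
      rcases abs_cases z with ⟨he, _⟩ | ⟨he, _⟩
      · rw [he]
      · rw [he, show x + -z = x - z by ring, show x - -z = x + z by ring]; ring
    rw [hNsym, div_le_iff₀ hden]
    obtain ⟨hxl, hxr⟩ := abs_le.mp hx
    by_cases h1 : |z| ≤ 1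
    · have hb : ∀ τ ∈ Set.Icc (x - |z|) (x + |z|), -(deriv (deriv φ) τ) ≤ K := by
        intro τ hτ
        have hKτ : ‖deriv (deriv φ) τ‖ ≤ K :=
          hK τ ⟨by linarith [hτ.1], by linarith [hτ.2]⟩
        rw [Real.norm_eq_abs] at hKτ
        obtain ⟨hl, _⟩ := abs_le.mp hKτ
        linarith
      have hNb := keyN x |z| K hy.le hb
      have hrw : ((K/2) * g1 z + M * g2 z) * (2 * |z| ^ (1 + 2 * α)) = K * |z| ^ 2 := by
        simp only [hg1def, hg2def, if_pos h1]
        have hab : |z| ^ (1 - 2*α) * |z| ^ (1 + 2*α) = |z| ^ 2 := by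
          rw [← Real.rpow_add hy, show (1 - 2*α) + (1 + 2*α) = (2:ℝ) by ring,
            show (2:ℝ) = ((2:ℕ):ℝ) by norm_num, Real.rpow_natCast]
        linear_combination K * hab
      rw [hrw]
      exact hNb
    · have hNb : 2 * φ x - φ (x + |z|) - φ (x - |z|) ≤ 2 * φ x := by
        linarith [(hφpos (x + |z|)).le, (hφpos (x - |z|)).le]
      have hrw : ((K/2) * g1 z + M * g2 z) * (2 * |z| ^ (1 + 2 * α)) = 2 * M := by
        simp only [hg1def, hg2def, if_neg h1]
        have hab : |z| ^ (-(1 + 2*α)) * |z| ^ (1 + 2*α) = 1 := by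
          rw [← Real.rpow_add hy, show -(1 + 2*α) + (1 + 2*α) = (0:ℝ) by ring, Real.rpow_zero]
        linear_combination 2 * M * hab
      rw [hrw]
      have := hφM x
      linarith
  -- pointwise bound, large regime
  have hlarge_pt : ∀ x : ℝ, A₂ ≤ x → ∀ z : ℝ, z ≠ 0 →
      (2 * φ x - φ (x + z) - φ (x - z)) / (2 * |z| ^ (1 + 2 * α))
        ≤ ((4*D₀/A₂^2) * φ x) * g1 z + (φ x) * g2 z := by
    intro x hx z hz
    have hy : 0 < |z| := abs_pos.mpr hz
    have hden : (0:ℝ) < 2 * |z| ^ (1 + 2 * α) := by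
      have := Real.rpow_pos_of_pos hy (1 + 2 * α); linarith
    have hx2 : (2:ℝ) ≤ x := le_trans hA₂2 hx
    have hxA : 2 * A₁ + 2 ≤ x := le_trans (le_of_eq hA₂def.symm) hx
    have hx0 : (0:ℝ) < x := by linarith
    have hNsym : 2 * φ x - φ (x + z) - φ (x - z)
        = 2 * φ x - φ (x + |z|) - φ (x - |z|) := by
      rcases abs_cases z with ⟨he, _⟩ | ⟨he, _⟩
      · rw [he]
      · rw [he, show x + -z = x - z by ring, show x - -z = x + z by ring]; ring
    rw [hNsym, div_le_iff₀ hden]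
    by_cases h1 : |z| ≤ 1
    · -- near field
      have hxy : A₁ + 1 ≤ x - |z| := by linarith
      have hxy2 : x/2 ≤ x - |z| := by linarith
      have hb : ∀ τ ∈ Set.Icc (x - |z|) (x + |z|), -(deriv (deriv φ) τ)
          ≤ 4*D₀*φ (x - |z|)/x^2 := by
        intro τ hτ
        have hτx : x - |z| ≤ τ := hτ.1
        have hτpos : (0:ℝ) < τ := by linarith
        have h1' := hsecond τ (by rw [abs_of_pos hτpos]; linarith)
        have h2' : φ τ ≤ φ (x - |z|) := by
          apply hmono
          rw [abs_of_pos hτpos, abs_of_pos (show (0:ℝ) < x - |z| by linarith)]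
          exact hτx
        have h3' : x^2/4 ≤ 1 + τ^2 := by nlinarith
        have h4' : D₀ * φ τ / (1 + τ^2) ≤ D₀ * φ (x - |z|) / (x^2/4) := by
          apply div_le_div₀ (mul_nonneg hD₀.le (hφpos _).le)
            (mul_le_mul_of_nonneg_left h2' hD₀.le) (by nlinarith) h3'
        have h5' : D₀ * φ (x - |z|) / (x^2/4) = 4*D₀*φ (x - |z|)/x^2 := by
          field_simp
        rw [h5'] at h4'
        linarith
      have hNb := keyN x |z| _ hy.le hb
      have hkey : 2 * φ x - φ (x + |z|) - φ (x - |z|) ≤ (8*D₀/A₂^2) * φ x * |z| ^ 2 := by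
        by_cases hcc : φ (x - |z|) ≤ 2 * φ x
        · have e1 : 4*D₀*φ (x - |z|)/x^2 * |z|^2 ≤ 8*D₀*φ x/A₂^2 * |z|^2 := by
            apply mul_le_mul_of_nonneg_right _ (sq_nonneg _)
            rw [div_le_div_iff₀ (pow_pos hx0 2) (pow_pos hA₂pos 2)]
            have hAx : A₂^2 ≤ x^2 := by nlinarith
            have c1 : (0:ℝ) ≤ 4*D₀*A₂^2 := mul_nonneg (by linarith) (sq_nonneg _)
            have c2 : (0:ℝ) ≤ 8*D₀*φ x := by nlinarith [(hφpos x).le]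
            nlinarith [mul_le_mul_of_nonneg_left hcc c1, mul_le_mul_of_nonneg_left hAx c2]
          calc 2 * φ x - φ (x + |z|) - φ (x - |z|) ≤ 4*D₀*φ (x - |z|)/x^2 * |z|^2 := hNb
            _ ≤ 8*D₀*φ x/A₂^2 * |z|^2 := e1
            _ = (8*D₀/A₂^2) * φ x * |z|^2 := by ring
        · push_neg at hcc
          have hneg : 2 * φ x - φ (x + |z|) - φ (x - |z|) ≤ 0 := by
            linarith [(hφpos (x + |z|)).le]
          have hpos : (0:ℝ) ≤ (8*D₀/A₂^2) * φ x * |z|^2 :=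
            mul_nonneg (mul_nonneg (div_nonneg (by linarith) (sq_nonneg _)) (hφpos x).le)
              (sq_nonneg _)
          linarith
      have hrw : (((4*D₀/A₂^2) * φ x) * g1 z + (φ x) * g2 z) * (2 * |z| ^ (1 + 2 * α))
          = (8*D₀/A₂^2) * φ x * |z| ^ 2 := by
        simp only [hg1def, hg2def, if_pos h1]
        have hab : |z| ^ (1 - 2*α) * |z| ^ (1 + 2*α) = |z| ^ 2 := by
          rw [← Real.rpow_add hy, show (1 - 2*α) + (1 + 2*α) = (2:ℝ) by ring,
            show (2:ℝ) = ((2:ℕ):ℝ) by norm_num, Real.rpow_natCast]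
        linear_combination (8*D₀/A₂^2 * φ x) * hab
      rw [hrw]
      exact hkey
    · -- far field
      have hNb : 2 * φ x - φ (x + |z|) - φ (x - |z|) ≤ 2 * φ x := by
        linarith [(hφpos (x + |z|)).le, (hφpos (x - |z|)).le]
      have hrw : (((4*D₀/A₂^2) * φ x) * g1 z + (φ x) * g2 z) * (2 * |z| ^ (1 + 2 * α))
          = 2 * φ x := by
        simp only [hg1def, hg2def, if_neg h1]
        have hab : |z| ^ (-(1 + 2*α)) * |z| ^ (1 + 2*α) = 1 := by
          rw [← Real.rpow_add hy, show -(1 + 2*α) + (1 + 2*α) = (0:ℝ) by ring, Real.rpow_zero]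
        linear_combination 2 * φ x * hab
      rw [hrw]
      exact hNb
  -- assemble
  obtain ⟨Ds, hDsdef⟩ : ∃ d : ℝ, d = cα * ((K/2) * Iin + M * Iout) := ⟨_, rfl⟩
  obtain ⟨Dl, hDldef⟩ : ∃ d : ℝ, d = cα * ((4*D₀/A₂^2) * Iin + Iout) := ⟨_, rfl⟩
  have hDs0 : 0 ≤ Ds := by
    rw [hDsdef]
    apply mul_nonneg hcα.le
    have := mul_nonneg (by linarith : (0:ℝ) ≤ K/2) hIin0
    have := mul_nonneg hM0 hIout0
    linarith
  have hDl0 : 0 ≤ Dl := by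
    rw [hDldef]
    apply mul_nonneg hcα.le
    have h1 : (0:ℝ) ≤ 4*D₀/A₂^2 := div_nonneg (by linarith) (sq_nonneg _)
    have := mul_nonneg h1 hIin0
    linarith
  refine ⟨Dl + Ds / φ A₂ + 1, ?_, ?_⟩
  · have : 0 ≤ Ds / φ A₂ := div_nonneg hDs0 (hφpos A₂).le
    linarith
  intro x
  have hply : ∀ w : ℝ, A₂ ≤ w → fracLap α cα φ w ≤ (Dl + Ds / φ A₂ + 1) * φ w := by
    intro w hw
    have hc₁ : (0:ℝ) ≤ (4*D₀/A₂^2) * φ w :=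
      mul_nonneg (div_nonneg (by linarith) (sq_nonneg _)) (hφpos w).le
    have h := hcore w ((4*D₀/A₂^2) * φ w) (φ w) hc₁ (hφpos w).le (hlarge_pt w hw)
    have e : cα * ((4*D₀/A₂^2) * φ w * Iin + φ w * Iout) = Dl * φ w := by
      rw [hDldef]; ring
    rw [e] at h
    have h2 : 0 ≤ Ds / φ A₂ * φ w :=
      mul_nonneg (div_nonneg hDs0 (hφpos A₂).le) (hφpos w).le
    nlinarith [(hφpos w).le]
  rcases le_or_gt |x| A₂ with hxs | hxl
  · have h := hcore x (K/2) M (by linarith) hM0 (hsmall_pt x hxs)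
    have hx' : φ A₂ ≤ φ x := hmono x A₂ (by rwa [abs_of_pos hA₂pos])
    have e1 : Ds / φ A₂ * φ A₂ = Ds := div_mul_cancel₀ _ (ne_of_gt (hφpos A₂))
    have h2 : Ds / φ A₂ * φ A₂ ≤ Ds / φ A₂ * φ x :=
      mul_le_mul_of_nonneg_left hx' (div_nonneg hDs0 (hφpos A₂).le)
    have h3 : 0 ≤ Dl * φ x := mul_nonneg hDl0 (hφpos x).le
    have h4 : fracLap α cα φ x ≤ Ds := by rw [hDsdef]; exact h
    nlinarith [(hφpos x).le]
  · rcases le_or_gt 0 x with hx0 | hx0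
    · refine hply x ?_
      rw [abs_of_nonneg hx0] at hxl
      linarith
    · have heq : fracLap α cα φ x = fracLap α cα φ (-x) := by
        show cα * (∫ z : ℝ, (2 * φ x - φ (x + z) - φ (x - z)) / (2 * |z| ^ (1 + 2 * α)))
          = cα * (∫ z : ℝ, (2 * φ (-x) - φ (-x + z) - φ (-x - z)) / (2 * |z| ^ (1 + 2 * α)))
        congr 1
        calc (∫ z : ℝ, (2 * φ x - φ (x + z) - φ (x - z)) / (2 * |z| ^ (1 + 2 * α)))
            = ∫ z : ℝ, (2 * φ (-x) - φ (-x + -z) - φ (-x - -z)) / (2 * |(-z)| ^ (1 + 2 * α)) := by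
              congr 1; funext z
              rw [abs_neg, show -x + -z = -(x + z) by ring, show -x - -z = -(x - z) by ring,
                heven (x + z), heven (x - z), heven x]
          _ = ∫ z : ℝ, (2 * φ (-x) - φ (-x + z) - φ (-x - z)) / (2 * |z| ^ (1 + 2 * α)) :=
              integral_neg_eq_self
                (fun z : ℝ => (2 * φ (-x) - φ (-x + z) - φ (-x - z)) / (2 * |z| ^ (1 + 2 * α)))
                volume
      rw [heq, show φ x = φ (-x) from (heven x).symm]
      refine hply (-x) ?_
      rw [abs_of_neg hx0] at hxl
      linarith
end
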